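/- Let α, β > 0 with α ≠ β, and let X ~ Gamma(shape α, rate α) and Y ~ Gamma(shape β, rate β) be independent. Then lim_{x→0+} log P(X·Y ≤ x) / log x = min(α, β). -/

import Mathlib

open MeasureTheory ProbabilityTheory Real Filter
open scoped ProbabilityTheory ENNReal Topology

namespace GammaGammaAux

open Set

lemma lintegral_rpow_Ioc {a c t : ℝ} (ha : 0 < a) (hc : 0 ≤ c) (ht : 0 ≤ t) :
    ∫⁻ u in Ioc (0:ℝ) t, ENNReal.ofReal (c * u ^ (a - 1)) = ENNReal.ofReal (c * t ^ a / a) := by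
  have hint : IntegrableOn (fun u : ℝ => u ^ (a - 1)) (Ioc 0 t) := by
    rw [← intervalIntegrable_iff_integrableOn_Ioc_of_le ht]
    exact intervalIntegral.intervalIntegrable_rpow' (by linarith)
  have hint2 : IntegrableOn (fun u : ℝ => c * u ^ (a - 1)) (Ioc 0 t) := hint.const_mul c
  rw [← ofReal_integral_eq_lintegral_ofReal hint2 ?_]
  · congr 1
    rw [MeasureTheory.integral_const_mul]
    have : ∫ u in Ioc (0:ℝ) t, u ^ (a - 1) = ∫ u in (0:ℝ)..t, u ^ (a-1) := by
      rw [intervalIntegral.integral_of_le ht]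
    rw [this, integral_rpow (Or.inl (by linarith))]
    rw [zero_rpow (by linarith), sub_add_cancel, sub_zero, mul_div_assoc]
  · filter_upwards [ae_restrict_mem measurableSet_Ioc] with u hu
    have : (0:ℝ) < u := hu.1
    positivity

lemma gamma_Iic_eq {a r t : ℝ} (ht : 0 ≤ t) :
    gammaMeasure a r (Iic t) = ∫⁻ u in Ioc (0:ℝ) t, gammaPDF a r u := by
  rw [gammaMeasure, withDensity_apply _ measurableSet_Iic,
    lintegral_Iic_eq_lintegral_Iio_add_Icc _ ht, lintegral_gammaPDF_of_nonpos le_rfl, zero_add]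
  exact setLIntegral_congr (Ioc_ae_eq_Icc (α := ℝ) (μ := volume)) |>.symm

lemma gamma_Iic_le {a t : ℝ} (ha : 0 < a) (ht : 0 ≤ t) :
    gammaMeasure a a (Iic t) ≤ ENNReal.ofReal (a ^ a / Gamma a * t ^ a / a) := by
  rw [gamma_Iic_eq ht, ← lintegral_rpow_Ioc ha (by positivity : (0:ℝ) ≤ a ^ a / Gamma a) ht]
  refine setLIntegral_mono (by fun_prop) fun u hu => ?_
  rw [gammaPDF_of_nonneg hu.1.le]
  refine ENNReal.ofReal_le_ofReal ?_
  have h1 : exp (-(a * u)) ≤ 1 := exp_le_one_iff.mpr (by nlinarith [hu.1.le, ha.le])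
  have h2 : (0:ℝ) ≤ a ^ a / Gamma a * u ^ (a-1) := by
    have := hu.1
    positivity
  nlinarith [h2, exp_pos (-(a*u))]

lemma gamma_Ioc_ge {a x : ℝ} (ha : 0 < a) (hx : x ∈ Ioc (0:ℝ) 1) :
    ENNReal.ofReal (exp (-a) * (a ^ a / Gamma a) * x ^ a / a) ≤ gammaMeasure a a (Ioc 0 x) := by
  rw [gammaMeasure, withDensity_apply _ measurableSet_Ioc,
    ← lintegral_rpow_Ioc ha (by positivity : (0:ℝ) ≤ exp (-a) * (a ^ a / Gamma a)) hx.1.le]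
  refine setLIntegral_mono ((measurable_gammaPDFReal _ _).ennreal_ofReal) fun u hu => ?_
  rw [gammaPDF_of_nonneg hu.1.le]
  refine ENNReal.ofReal_le_ofReal ?_
  have hu1 : u ≤ 1 := hu.2.trans hx.2
  have h1 : exp (-a) ≤ exp (-(a * u)) := by
    apply exp_le_exp.mpr; nlinarith [hu.1.le]
  have h2 : (0:ℝ) ≤ a ^ a / Gamma a * u ^ (a-1) := by
    have := hu.1
    positivity
  nlinarith [h2, exp_pos (-a)]

lemma measurable_gammaPDF (a r : ℝ) : Measurable (gammaPDF a r) :=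
  (measurable_gammaPDFReal a r).ennreal_ofReal

lemma measurableSet_S (x : ℝ) : MeasurableSet {p : ℝ × ℝ | p.1 * p.2 ≤ x} :=
  measurableSet_le (measurable_fst.mul measurable_snd) measurable_const

lemma prod_upper {a b : ℝ} (ha : 0 < a) (hb : 0 < b) (hab : a < b) :
    ∃ C : ℝ, 0 < C ∧ ∀ x : ℝ, 0 < x →
      (gammaMeasure a a).prod (gammaMeasure b b) {p : ℝ × ℝ | p.1 * p.2 ≤ x}
        ≤ ENNReal.ofReal (C * x ^ a) := by
  have hba : 0 < b - a := sub_pos.mpr hab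
  set Ka : ℝ := a ^ a / Gamma a / a with hKa
  set D : ℝ := b ^ b * Gamma (b - a) / (Gamma b * b ^ (b - a)) with hD
  have hKapos : 0 < Ka := by
    have := Gamma_pos_of_pos ha
    have := rpow_pos_of_pos ha a
    positivity
  have hDpos : 0 < D := by
    have := Gamma_pos_of_pos hb
    have := Gamma_pos_of_pos hba
    have := rpow_pos_of_pos hb b
    have := rpow_pos_of_pos hb (b - a)
    positivity
  haveI := isProbabilityMeasure_gammaMeasure ha ha
  haveI := isProbabilityMeasure_gammaMeasure hb hb
  refine ⟨Ka * D, by positivity, fun x hx => ?_⟩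
  have hS := measurableSet_S x
  rw [Measure.prod_apply_symm hS]
  have hmeas : Measurable fun v : ℝ =>
      gammaMeasure a a ((fun u => (u, v)) ⁻¹' {p : ℝ × ℝ | p.1 * p.2 ≤ x}) :=
    measurable_measure_prodMk_right hS
  rw [show gammaMeasure b b = volume.withDensity (gammaPDF b b) from rfl,
    lintegral_withDensity_eq_lintegral_mul _ (measurable_gammaPDF b b) hmeas]
  have key : ∀ᵐ v : ℝ, (gammaPDF b b * fun v : ℝ =>
      gammaMeasure a a ((fun u => (u, v)) ⁻¹' {p : ℝ × ℝ | p.1 * p.2 ≤ x})) v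
      ≤ ENNReal.ofReal (Ka * D * x ^ a) * gammaPDF (b - a) b v := by
    filter_upwards [compl_mem_ae_iff.mpr (volume_singleton (a := (0:ℝ)))] with v hv
    simp only [Pi.mul_apply]
    have hvne : v ≠ 0 := hv
    rcases lt_or_gt_of_ne hvne with hneg | hpos
    · rw [gammaPDF_of_neg hneg, zero_mul]
      exact zero_le
    · have hpre : ((fun u => (u, v)) ⁻¹' {p : ℝ × ℝ | p.1 * p.2 ≤ x}) = Iic (x / v) := by
        ext u
        simp [Set.mem_Iic, le_div_iff₀ hpos]
      rw [hpre]
      have h1 := gamma_Iic_le ha (le_of_lt (div_pos hx hpos))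
      calc gammaPDF b b v * gammaMeasure a a (Iic (x / v))
          ≤ gammaPDF b b v * ENNReal.ofReal (a ^ a / Gamma a * (x / v) ^ a / a) :=
            mul_le_mul_right h1 _
        _ = ENNReal.ofReal (Ka * D * x ^ a) * gammaPDF (b - a) b v := by
            rw [gammaPDF_of_nonneg hpos.le, gammaPDF_of_nonneg hpos.le,
              ← ENNReal.ofReal_mul (by positivity), ← ENNReal.ofReal_mul (by positivity)]
            congr 1
            have hΓb := (Gamma_pos_of_pos hb).ne'
            have hΓba := (Gamma_pos_of_pos hba).ne'
            have hva : v ^ a ≠ 0 := (rpow_pos_of_pos hpos a).ne'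
            have hbba : (b:ℝ) ^ (b - a) ≠ 0 := (rpow_pos_of_pos hb (b - a)).ne'
            have hsplit : v ^ (b - 1) = v ^ (b - a - 1) * v ^ a := by
              rw [← rpow_add hpos]; ring_nf
            have hdiv : (x / v) ^ a = x ^ a / v ^ a := div_rpow hx.le hpos.le a
            rw [hKa, hD, hdiv, hsplit]
            field_simp
  calc ∫⁻ v, (gammaPDF b b * fun v : ℝ =>
        gammaMeasure a a ((fun u => (u, v)) ⁻¹' {p : ℝ × ℝ | p.1 * p.2 ≤ x})) v
      ≤ ∫⁻ v, ENNReal.ofReal (Ka * D * x ^ a) * gammaPDF (b - a) b v := lintegral_mono_ae key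
    _ = ENNReal.ofReal (Ka * D * x ^ a) := by
        rw [lintegral_const_mul _ (measurable_gammaPDF _ _), lintegral_gammaPDF_eq_one hba hb,
          mul_one]

lemma prod_lower {a b : ℝ} (ha : 0 < a) (hb : 0 < b) :
    ∃ c : ℝ, 0 < c ∧ ∀ x ∈ Ioc (0:ℝ) 1,
      ENNReal.ofReal (c * x ^ a)
        ≤ (gammaMeasure a a).prod (gammaMeasure b b) {p : ℝ × ℝ | p.1 * p.2 ≤ x} := by
  set ca : ℝ := exp (-a) * (a ^ a / Gamma a) / a with hca
  set cb : ℝ := exp (-b) * (b ^ b / Gamma b) / b with hcb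
  have hcapos : 0 < ca := by
    have := Gamma_pos_of_pos ha
    have := rpow_pos_of_pos ha a
    have := exp_pos (-a)
    positivity
  have hcbpos : 0 < cb := by
    have := Gamma_pos_of_pos hb
    have := rpow_pos_of_pos hb b
    have := exp_pos (-b)
    positivity
  haveI := isProbabilityMeasure_gammaMeasure ha ha
  haveI := isProbabilityMeasure_gammaMeasure hb hb
  refine ⟨ca * cb, by positivity, fun x hx => ?_⟩
  have hsub : (Ioc (0:ℝ) x) ×ˢ (Ioc (0:ℝ) 1) ⊆ {p : ℝ × ℝ | p.1 * p.2 ≤ x} := by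
    rintro ⟨u, v⟩ ⟨⟨hu0, hux⟩, hv0, hv1⟩
    simp only [Set.mem_setOf_eq]
    nlinarith
  have hx1 : (1:ℝ) ∈ Ioc (0:ℝ) 1 := ⟨one_pos, le_rfl⟩
  have hga := gamma_Ioc_ge ha hx
  have hgb := gamma_Ioc_ge hb hx1
  rw [one_rpow] at hgb
  have hxa : (0:ℝ) < x ^ a := rpow_pos_of_pos hx.1 a
  calc ENNReal.ofReal (ca * cb * x ^ a)
      = ENNReal.ofReal (rexp (-a) * (a ^ a / Gamma a) * x ^ a / a)
        * ENNReal.ofReal (rexp (-b) * (b ^ b / Gamma b) * 1 / b) := by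
        rw [← ENNReal.ofReal_mul (by positivity)]
        congr 1
        rw [hca, hcb]; ring
    _ ≤ (gammaMeasure a a) (Ioc 0 x) * (gammaMeasure b b) (Ioc 0 1) := mul_le_mul' hga hgb
    _ = (gammaMeasure a a).prod (gammaMeasure b b) ((Ioc (0:ℝ) x) ×ˢ (Ioc (0:ℝ) 1)) :=
        (Measure.prod_prod _ _).symm
    _ ≤ _ := measure_mono hsub

lemma prod_swap_eq {a b : ℝ} (ha : 0 < a) (hb : 0 < b) (x : ℝ) :
    (gammaMeasure a a).prod (gammaMeasure b b) {p : ℝ × ℝ | p.1 * p.2 ≤ x}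
      = (gammaMeasure b b).prod (gammaMeasure a a) {p : ℝ × ℝ | p.1 * p.2 ≤ x} := by
  haveI := isProbabilityMeasure_gammaMeasure ha ha
  haveI := isProbabilityMeasure_gammaMeasure hb hb
  rw [← Measure.prod_swap, Measure.map_apply measurable_swap (measurableSet_S x)]
  congr 1
  ext p
  simp only [Set.mem_preimage, Prod.fst_swap, Prod.snd_swap, Set.mem_setOf_eq]
  rw [mul_comm]

lemma prod_bounds {a b : ℝ} (ha : 0 < a) (hb : 0 < b) (hab : a ≠ b) :
    ∃ c C : ℝ, 0 < c ∧ 0 < C ∧ ∀ x ∈ Ioc (0:ℝ) 1,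
      ENNReal.ofReal (c * x ^ (min a b))
          ≤ (gammaMeasure a a).prod (gammaMeasure b b) {p : ℝ × ℝ | p.1 * p.2 ≤ x}
        ∧ (gammaMeasure a a).prod (gammaMeasure b b) {p : ℝ × ℝ | p.1 * p.2 ≤ x}
          ≤ ENNReal.ofReal (C * x ^ (min a b)) := by
  rcases hab.lt_or_gt with h | h
  · obtain ⟨c, hc, hcl⟩ := prod_lower ha hb
    obtain ⟨C, hC, hCu⟩ := prod_upper ha hb h
    rw [min_eq_left h.le]
    exact ⟨c, C, hc, hC, fun x hx => ⟨hcl x hx, hCu x hx.1⟩⟩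
  · obtain ⟨c, hc, hcl⟩ := prod_lower hb ha
    obtain ⟨C, hC, hCu⟩ := prod_upper hb ha h
    rw [min_eq_right h.le]
    refine ⟨c, C, hc, hC, fun x hx => ?_⟩
    rw [prod_swap_eq ha hb x]
    exact ⟨hcl x hx, hCu x hx.1⟩


lemma log_div_log_tendsto {m c C : ℝ} (hc : 0 < c) (hC : 0 < C) (f : ℝ → ℝ)
    (h : ∀ x ∈ Ioc (0:ℝ) 1, c * x ^ m ≤ f x ∧ f x ≤ C * x ^ m) :
    Tendsto (fun x => Real.log (f x) / Real.log x) (𝓝[>] (0:ℝ)) (𝓝 m) := by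
  have hinv : Tendsto (fun x : ℝ => (Real.log x)⁻¹) (𝓝[>] (0:ℝ)) (𝓝 0) := by
    have h1 : Tendsto (fun x : ℝ => -Real.log x) (𝓝[>] (0:ℝ)) atTop :=
      tendsto_neg_atBot_atTop.comp tendsto_log_nhdsGT_zero
    have h2 := (tendsto_inv_atTop_zero.comp h1).neg
    simp only [Function.comp, neg_zero] at h2
    convert h2 using 2 with x
    rw [← inv_neg, neg_neg]
  have hev : ∀ᶠ x in 𝓝[>] (0:ℝ), x ∈ Ioo (0:ℝ) 1 :=
    Ioo_mem_nhdsGT_of_mem ⟨le_rfl, one_pos⟩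
  have hbound : ∀ x ∈ Ioo (0:ℝ) 1,
      Real.log C * (Real.log x)⁻¹ + m ≤ Real.log (f x) / Real.log x ∧
      Real.log (f x) / Real.log x ≤ Real.log c * (Real.log x)⁻¹ + m := by
    intro x hx
    have hlx : Real.log x < 0 := log_neg hx.1 hx.2
    have hxm : 0 < x ^ m := rpow_pos_of_pos hx.1 m
    obtain ⟨hl, hu⟩ := h x ⟨hx.1, hx.2.le⟩
    have hfx : 0 < f x := lt_of_lt_of_le (by positivity) hl
    have hlog_low : Real.log c + m * Real.log x ≤ Real.log (f x) := by
      calc Real.log c + m * Real.log x = Real.log (c * x ^ m) := by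
            rw [log_mul hc.ne' hxm.ne', log_rpow hx.1]
        _ ≤ Real.log (f x) := log_le_log (by positivity) hl
    have hlog_up : Real.log (f x) ≤ Real.log C + m * Real.log x := by
      calc Real.log (f x) ≤ Real.log (C * x ^ m) := log_le_log hfx hu
        _ = Real.log C + m * Real.log x := by rw [log_mul hC.ne' hxm.ne', log_rpow hx.1]
    constructor
    · calc Real.log C * (Real.log x)⁻¹ + m
          = (Real.log C + m * Real.log x) / Real.log x := by rw [add_div, mul_div_assoc, div_self hlx.ne, mul_one, div_eq_mul_inv]
        _ ≤ Real.log (f x) / Real.log x := (div_le_div_right_of_neg hlx).mpr hlog_up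
    · calc Real.log (f x) / Real.log x
          ≤ (Real.log c + m * Real.log x) / Real.log x :=
            (div_le_div_right_of_neg hlx).mpr hlog_low
        _ = Real.log c * (Real.log x)⁻¹ + m := by rw [add_div, mul_div_assoc, div_self hlx.ne, mul_one, div_eq_mul_inv]
  have hlo : Tendsto (fun x : ℝ => Real.log C * (Real.log x)⁻¹ + m) (𝓝[>] (0:ℝ)) (𝓝 m) := by
    have := (hinv.const_mul (Real.log C)).add_const m
    simpa using this
  have hhi : Tendsto (fun x : ℝ => Real.log c * (Real.log x)⁻¹ + m) (𝓝[>] (0:ℝ)) (𝓝 m) := by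
    have := (hinv.const_mul (Real.log c)).add_const m
    simpa using this
  refine tendsto_of_tendsto_of_tendsto_of_le_of_le' hlo hhi ?_ ?_
  · filter_upwards [hev] with x hx using (hbound x hx).1
  · filter_upwards [hev] with x hx using (hbound x hx).2

end GammaGammaAux

/-- Lower-tail polynomial order of the gamma-gamma coefficient `X·Y` (with
`X ~ Gamma(α,α)`, `Y ~ Gamma(β,β)` independent, `α ≠ β`):
`log P(XY ≤ x)/log x → min(α,β)` as `x → 0⁺`. -/
theorem gammaGamma_lower_tail {Ω : Type*} [MeasureSpace Ω]
    [IsProbabilityMeasure (ℙ : Measure Ω)]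
    (a b : ℝ) (ha : 0 < a) (hb : 0 < b) (hab : a ≠ b)
    (X Y : Ω → ℝ) (hXmeas : Measurable X) (hYmeas : Measurable Y)
    (hXlaw : Measure.map X ℙ = gammaMeasure a a)
    (hYlaw : Measure.map Y ℙ = gammaMeasure b b)
    (hindep : IndepFun X Y ℙ) :
    Filter.Tendsto
      (fun x : ℝ => Real.log ((ℙ {ω | X ω * Y ω ≤ x}).toReal) / Real.log x)
      (nhdsWithin 0 (Set.Ioi 0))
      (nhds (min a b)) := by
  classical
  haveI := isProbabilityMeasure_gammaMeasure ha ha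
  haveI := isProbabilityMeasure_gammaMeasure hb hb
  have hmap : Measure.map (fun ω => (X ω, Y ω)) ℙ = (gammaMeasure a a).prod (gammaMeasure b b) := by
    rw [← hXlaw, ← hYlaw]
    exact (indepFun_iff_map_prod_eq_prod_map_map hXmeas.aemeasurable
      hYmeas.aemeasurable).mp hindep
  have hPx : ∀ x : ℝ, ℙ {ω | X ω * Y ω ≤ x}
      = (gammaMeasure a a).prod (gammaMeasure b b) {p : ℝ × ℝ | p.1 * p.2 ≤ x} := by
    intro x
    rw [← hmap, Measure.map_apply (hXmeas.prodMk hYmeas) (GammaGammaAux.measurableSet_S x)]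
    rfl
  obtain ⟨c, C, hc, hC, hbd⟩ := GammaGammaAux.prod_bounds ha hb hab
  refine GammaGammaAux.log_div_log_tendsto hc hC _ fun x hx => ?_
  obtain ⟨h1, h2⟩ := hbd x hx
  rw [← hPx x] at h1 h2
  have hx0 := hx.1
  constructor
  · have := ENNReal.toReal_mono (measure_ne_top _ _) h1
    rwa [ENNReal.toReal_ofReal (by positivity)] at this
  · exact ENNReal.toReal_le_of_le_ofReal (by positivity) h2
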